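/- (Transfer of small-time asymptotics through an inverse subordinator.) Suppose the Laplace exponent φ is regularly varying at ∞ with index β ∈ (0,1). Let α ∈ (0,2), let c > 0, and let F : (0,∞) → [0,∞) be a bounded measurable function with F(s) ~ c f_α(s) as s ↓ 0. Then for every δ > 0, E[F(E_t)] ~ c E[f_α(E_t) ; E_t ≤ δ] as t ↓ 0, where E[f_α(E_t) ; E_t ≤ δ] denotes the expectation of f_α(E_t) restricted to the event {0 < E_t ≤ δ}. -/

import Mathlib

open MeasureTheory Filter Set

/-- `fα(t)`: the rate function `t^{1/α}` for `α ∈ (1,2)`, `t ln(1/t)` for `α = 1`,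
and `t` for `α ∈ (0,1)`. -/
noncomputable def falpha (α t : ℝ) : ℝ :=
  if 1 < α then t ^ (1 / α) else if α = 1 then t * Real.log (1 / t) else t

lemma falpha_meas (α : ℝ) : Measurable (falpha α) := by
  unfold falpha
  split_ifs
  · exact measurable_id.pow_const _
  · exact measurable_id.mul (Real.measurable_log.comp (measurable_const.div measurable_id))
  · exact measurable_id

lemma mul_log_mono : MonotoneOn (fun s : ℝ => s * Real.log (1/s)) (Set.Icc 0 (Real.exp (-1))) := by
  have hfun : (fun s : ℝ => s * Real.log (1/s)) = fun s => -(s * Real.log s) := by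
    funext s; rw [one_div, Real.log_inv]; ring
  rw [hfun]
  apply monotoneOn_of_deriv_nonneg (convex_Icc _ _) Real.continuous_mul_log.neg.continuousOn
  · intro x hx
    rw [interior_Icc] at hx
    exact ((Real.hasDerivAt_mul_log hx.1.ne').neg).differentiableAt.differentiableWithinAt
  · intro x hx
    rw [interior_Icc] at hx
    rw [(Real.hasDerivAt_mul_log hx.1.ne').neg.deriv]
    have : Real.log x < -1 := by
      have := Real.log_lt_log hx.1 hx.2
      rwa [Real.log_exp] at this
    linarith

lemma falpha_mono {α : ℝ} (hα0 : 0 < α) {s s' : ℝ} (hs : 0 < s) (hss : s ≤ s')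
    (hs' : s' ≤ Real.exp (-1)) : falpha α s ≤ falpha α s' := by
  unfold falpha
  split_ifs with h1 h2
  · exact Real.rpow_le_rpow hs.le hss (by positivity)
  · exact mul_log_mono ⟨hs.le, le_trans hss hs'⟩ ⟨le_trans hs.le hss, hs'⟩ hss
  · exact hss

lemma exp_neg_one_lt_one : Real.exp (-1) < 1 := by
  rw [Real.exp_lt_one_iff]; norm_num

lemma falpha_pos {α : ℝ} (hα0 : 0 < α) {s : ℝ} (hs : 0 < s) (hs1 : s ≤ Real.exp (-1)) :
    0 < falpha α s := by
  unfold falpha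
  split_ifs with h1 h2
  · exact Real.rpow_pos_of_pos hs _
  · exact mul_pos hs (Real.log_pos (by
      rw [lt_div_iff₀ hs, one_mul]; exact lt_of_le_of_lt hs1 exp_neg_one_lt_one))
  · exact hs

lemma falpha_ge_self {α : ℝ} (hα0 : 0 < α) {s : ℝ} (hs : 0 < s) (hs1 : s ≤ Real.exp (-1)) :
    s ≤ falpha α s := by
  have hslt1 : s ≤ 1 := le_trans hs1 exp_neg_one_lt_one.le
  unfold falpha
  split_ifs with h1 h2
  · calc s = s ^ (1:ℝ) := (Real.rpow_one s).symm
      _ ≤ s ^ (1/α) := Real.rpow_le_rpow_of_exponent_ge hs hslt1 (by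
          rw [div_le_one hα0]; linarith)
  · have hlog : 1 ≤ Real.log (1/s) := by
      rw [Real.le_log_iff_exp_le (by positivity), le_div_iff₀ hs]
      calc Real.exp 1 * s ≤ Real.exp 1 * Real.exp (-1) := by
            exact mul_le_mul_of_nonneg_left hs1 (Real.exp_pos 1).le
        _ = 1 := by rw [← Real.exp_add]; norm_num
    calc s = s * 1 := (mul_one s).symm
      _ ≤ s * Real.log (1/s) := mul_le_mul_of_nonneg_left hlog hs.le
  · exact le_refl s

lemma falpha_le_one {α : ℝ} (hα0 : 0 < α) {s : ℝ} (hs : 0 < s) (hs1 : s ≤ Real.exp (-1)) :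
    falpha α s ≤ 1 := by
  have hslt1 : s ≤ 1 := le_trans hs1 exp_neg_one_lt_one.le
  unfold falpha
  split_ifs with h1 h2
  · exact Real.rpow_le_one hs.le hslt1 (by positivity)
  · have hlog : Real.log (1/s) ≤ 1/s := le_trans
      (Real.log_le_sub_one_of_pos (by positivity)) (by linarith)
    calc s * Real.log (1/s) ≤ s * (1/s) := mul_le_mul_of_nonneg_left hlog hs.le
      _ = 1 := by field_simp
  · exact hslt1

lemma falpha_abs_le {α δ : ℝ} (hδ : 0 < δ) {s : ℝ} (hs : 0 < s) (hsd : s ≤ δ) :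
    |falpha α s| ≤ δ ^ (1/α) + δ^2 + δ + 1 := by
  have h1 : (0:ℝ) ≤ δ ^ (1/α) := Real.rpow_nonneg hδ.le _
  unfold falpha
  split_ifs with ha hb
  · rw [abs_of_nonneg (Real.rpow_nonneg hs.le _)]
    have := Real.rpow_le_rpow hs.le hsd (le_of_lt (by positivity) : (0:ℝ) ≤ 1/α)
    nlinarith
  · have habs : |Real.log (1/s)| ≤ s + 1/s := by
      rw [abs_le]
      constructor
      · have : Real.log s ≤ s - 1 := Real.log_le_sub_one_of_pos hs
        rw [one_div, Real.log_inv]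
        have h0 : 0 < s⁻¹ := by positivity
        nlinarith
      · have : Real.log (1/s) ≤ 1/s - 1 := Real.log_le_sub_one_of_pos (by positivity)
        nlinarith
    have : |s * Real.log (1/s)| = s * |Real.log (1/s)| := by
      rw [abs_mul, abs_of_nonneg hs.le]
    rw [this]
    have hb2 : s * |Real.log (1/s)| ≤ s * (s + 1/s) := mul_le_mul_of_nonneg_left habs hs.le
    have : s * (s + 1/s) = s^2 + 1 := by field_simp
    nlinarith
  · rw [abs_of_nonneg hs.le]; nlinarith

lemma two_div_atTop : Tendsto (fun t : ℝ => 2 / t) (nhdsWithin 0 (Set.Ioi 0)) atTop := by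
  have h := tendsto_inv_nhdsGT_zero (𝕜 := ℝ)
  have h2 := Tendsto.const_mul_atTop (r := (2:ℝ)) (by norm_num) h
  simpa [div_eq_mul_inv] using h2

lemma one_div_atTop : Tendsto (fun t : ℝ => 1 / t) (nhdsWithin 0 (Set.Ioi 0)) atTop := by
  simpa [one_div] using tendsto_inv_nhdsGT_zero (𝕜 := ℝ)

lemma x_exp_neg (γ : ℝ) (hγ : 0 < γ) :
    Tendsto (fun x : ℝ => x * Real.exp (-(γ * x))) atTop (nhds 0) := by
  have base := Real.tendsto_pow_mul_exp_neg_atTop_nhds_zero 1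
  have hmul : Tendsto (fun x : ℝ => γ * x) atTop atTop :=
    Tendsto.const_mul_atTop hγ tendsto_id
  have hcomp := (base.comp hmul).const_mul (1/γ)
  rw [mul_zero] at hcomp
  refine hcomp.congr (fun x => ?_)
  simp only [Function.comp, pow_one]
  field_simp

lemma key_limit (φ : ℝ → ℝ) (hφpos : ∀ l : ℝ, 0 < l → 0 < φ l)
    (hφtop : Tendsto φ atTop atTop) (β : ℝ)
    (hRV : Tendsto (fun l => φ (2 * l) / φ l) atTop (nhds ((2:ℝ) ^ β)))
    (γ : ℝ) (hγ : 0 < γ) :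
    Tendsto (fun t => Real.exp (1 - γ * φ (1/t)) * φ (2/t))
      (nhdsWithin 0 (Set.Ioi 0)) (nhds 0) := by
  have h1 : Tendsto (fun t : ℝ => φ (2 * (1/t)) / φ (1/t)) (nhdsWithin 0 (Set.Ioi 0))
      (nhds ((2:ℝ)^β)) := hRV.comp one_div_atTop
  have h3 : Tendsto (fun t : ℝ => φ (1/t)) (nhdsWithin 0 (Set.Ioi 0)) atTop :=
    hφtop.comp one_div_atTop
  have h4 : Tendsto (fun t : ℝ => φ (1/t) * Real.exp (-(γ * φ (1/t))))
      (nhdsWithin 0 (Set.Ioi 0)) (nhds 0) := (x_exp_neg γ hγ).comp h3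
  have h5 := ((h1.mul h4).const_mul (Real.exp 1))
  rw [mul_zero, mul_zero] at h5
  refine h5.congr' ?_
  filter_upwards [self_mem_nhdsWithin] with t ht
  have ht : (0:ℝ) < t := ht
  have hφ1 : 0 < φ (1/t) := hφpos _ (by positivity)
  have h2t : 2 * (1/t) = 2/t := by ring
  rw [h2t, sub_eq_add_neg, Real.exp_add]
  field_simp

section helpers
variable {Ω : Type*} [MeasurableSpace Ω] (P : Measure Ω) [IsProbabilityMeasure P]

lemma integrable_of_bound (g : Ω → ℝ) (hg : Measurable g) (C : ℝ) (hC : ∀ ω, |g ω| ≤ C) :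
    Integrable g P :=
  (integrable_const C).mono' hg.aestronglyMeasurable
    (Filter.Eventually.of_forall (fun ω => by rw [Real.norm_eq_abs]; exact hC ω))

lemma meas_le_integral {s : Set Ω} (hs : MeasurableSet s) {g : Ω → ℝ} (hg : Integrable g P)
    (h1 : ∀ ω ∈ s, 1 ≤ g ω) (h0 : ∀ ω, 0 ≤ g ω) :
    (P s).toReal ≤ ∫ ω, g ω ∂P := by
  have key := integral_indicator_const (1:ℝ) hs (μ := P)
  have hmono : ∫ ω, s.indicator (fun _ => (1:ℝ)) ω ∂P ≤ ∫ ω, g ω ∂P := by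
    apply integral_mono ((integrable_const (1:ℝ)).indicator hs) hg
    intro ω
    by_cases hω : ω ∈ s
    · simp only [Set.indicator_of_mem hω]; exact h1 ω hω
    · simp only [Set.indicator_of_notMem hω]; exact h0 ω
  rw [key] at hmono
  have h' : P.real s ≤ ∫ ω, g ω ∂P := by simpa using hmono
  exact h'

lemma integral_le_meas_add {s : Set Ω} (hs : MeasurableSet s) {g : Ω → ℝ} (hg : Integrable g P)
    (r : ℝ) (h : ∀ ω, g ω ≤ s.indicator (fun _ => (1:ℝ)) ω + r) :
    ∫ ω, g ω ∂P ≤ (P s).toReal + r := by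
  have hind : Integrable (s.indicator (fun _ => (1:ℝ))) P := (integrable_const 1).indicator hs
  have hmono := integral_mono hg (hind.add (integrable_const r)) h
  simp only [Pi.add_apply] at hmono
  rw [integral_add hind (integrable_const r), integral_indicator_const (1:ℝ) hs,
    integral_const] at hmono
  have h' : ∫ ω, g ω ∂P ≤ P.real s + r := by simpa using hmono
  exact h'

lemma meas_toReal_mono {A B : Set Ω} (h : P A ≤ P B) : (P A).toReal ≤ (P B).toReal :=
  ENNReal.toReal_mono (measure_ne_top P B) h

end helpers

section pathwise
variable {D : ℝ → ℝ}

lemma S_nonempty (hD0 : D 0 = 0) (hunb : ∀ M : ℝ, ∃ u : ℝ, 0 ≤ u ∧ M < D u)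
    {t : ℝ} (ht : 0 ≤ t) : {u : ℝ | 0 < u ∧ t < D u}.Nonempty := by
  obtain ⟨u, hu0, hut⟩ := hunb t
  refine ⟨u, ?_, hut⟩
  rcases hu0.eq_or_lt with h | h
  · exfalso; rw [← h, hD0] at hut; linarith
  · exact h

lemma Ele {t u : ℝ} (hu : 0 < u) (h : t < D u) :
    sInf {v : ℝ | 0 < v ∧ t < D v} ≤ u :=
  csInf_le ⟨0, fun v hv => hv.1.le⟩ ⟨hu, h⟩

lemma Ege (hmono : MonotoneOn D (Set.Ici 0)) (hD0 : D 0 = 0)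
    (hunb : ∀ M : ℝ, ∃ u : ℝ, 0 ≤ u ∧ M < D u)
    {t u : ℝ} (ht : 0 ≤ t) (hu : 0 < u) (h : D u ≤ t) :
    u ≤ sInf {v : ℝ | 0 < v ∧ t < D v} := by
  apply le_csInf (S_nonempty hD0 hunb ht)
  intro v hv
  by_contra hvu
  push_neg at hvu
  have : D v ≤ D u := hmono (Set.mem_Ici.2 hv.1.le) (Set.mem_Ici.2 hu.le) hvu.le
  linarith [hv.2]

lemma Epos (hcont : ContinuousWithinAt D (Set.Ici 0) 0) (hD0 : D 0 = 0)
    (hunb : ∀ M : ℝ, ∃ u : ℝ, 0 ≤ u ∧ M < D u) {t : ℝ} (ht : 0 < t) :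
    0 < sInf {v : ℝ | 0 < v ∧ t < D v} := by
  have htends : Tendsto D (nhdsWithin 0 (Set.Ici 0)) (nhds 0) := by
    have := hcont.tendsto; rwa [hD0] at this
  have hev : ∀ᶠ v in nhdsWithin 0 (Set.Ici 0), D v < t :=
    htends.eventually (tendsto_id.eventually_lt_const ht)
  rw [eventually_nhdsWithin_iff, Metric.eventually_nhds_iff] at hev
  obtain ⟨r, hr, hball⟩ := hev
  have hle : r/2 ≤ sInf {v : ℝ | 0 < v ∧ t < D v} := by
    apply le_csInf (S_nonempty hD0 hunb ht.le)
    intro v hv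
    by_contra hlt
    push_neg at hlt
    have hdist : dist v 0 < r := by
      rw [Real.dist_eq, sub_zero, abs_of_pos hv.1]; linarith
    have := hball hdist (Set.mem_Ici.2 hv.1.le)
    linarith [hv.2]
  linarith

end pathwise

section cheb
variable {Ω : Type*} [MeasurableSpace Ω] (P : Measure Ω) [IsProbabilityMeasure P]

lemma exp_neg_integrable (Y : Ω → ℝ) (hY : Measurable Y) (hYnn : ∀ ω, 0 ≤ Y ω)
    {l : ℝ} (hl : 0 < l) : Integrable (fun ω => Real.exp (-l * Y ω)) P := by
  apply integrable_of_bound P _ ((measurable_const.mul hY).exp) 1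
  intro ω
  rw [abs_of_pos (Real.exp_pos _), Real.exp_le_one_iff]
  have := hYnn ω; simp only [Pi.mul_apply]; nlinarith

lemma tail_upper (Y : Ω → ℝ) (hY : Measurable Y) (hYnn : ∀ ω, 0 ≤ Y ω)
    {t l I : ℝ} (hl : 0 < l) (hI : ∫ ω, Real.exp (-l * Y ω) ∂P = I) :
    (P {ω | Y ω ≤ t}).toReal ≤ Real.exp (l * t) * I := by
  have hmeas : MeasurableSet {ω | Y ω ≤ t} := hY measurableSet_Iic
  have hint : Integrable (fun ω => Real.exp (l*t) * Real.exp (-l * Y ω)) P :=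
    (exp_neg_integrable P Y hY hYnn hl).const_mul _
  have hle := meas_le_integral P hmeas hint ?_ ?_
  · rw [integral_const_mul, hI] at hle
    exact hle
  · intro ω hω
    rw [← Real.exp_add]
    apply Real.one_le_exp
    have : Y ω ≤ t := hω
    nlinarith
  · intro ω; positivity

lemma tail_lower (Y : Ω → ℝ) (hY : Measurable Y) (hYnn : ∀ ω, 0 ≤ Y ω)
    {t l I : ℝ} (hl : 0 < l) (hI : ∫ ω, Real.exp (-l * Y ω) ∂P = I) :
    I ≤ (P {ω | Y ω ≤ t}).toReal + Real.exp (-(l * t)) := by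
  have hmeas : MeasurableSet {ω | Y ω ≤ t} := hY measurableSet_Iic
  rw [← hI]
  apply integral_le_meas_add P hmeas (exp_neg_integrable P Y hY hYnn hl)
  intro ω
  by_cases hω : Y ω ≤ t
  · rw [Set.indicator_of_mem (by exact hω : ω ∈ {ω | Y ω ≤ t})]
    have h1 : Real.exp (-l * Y ω) ≤ 1 := by
      rw [Real.exp_le_one_iff]; have := hYnn ω; nlinarith
    have h2 : (0:ℝ) < Real.exp (-(l * t)) := Real.exp_pos _
    linarith
  · rw [Set.indicator_of_notMem (by exact hω : ω ∉ {ω | Y ω ≤ t})]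
    push_neg at hω
    have : Real.exp (-l * Y ω) ≤ Real.exp (-(l * t)) := by
      apply Real.exp_le_exp.2; nlinarith
    linarith

end cheb


set_option maxHeartbeats 1000000 in
/-- Transfer of small-time asymptotics through an inverse subordinator: if `φ` is regularly
varying at `∞` with index `β ∈ (0,1)`, `α ∈ (0,2)`, `c > 0`, and `F` is a bounded nonnegative
measurable function with `F(s) ~ c fα(s)` as `s ↓ 0`, then for every `δ > 0`,
`E[F(E_t)] ~ c E[fα(E_t) ; E_t ≤ δ]` as `t ↓ 0`. -/
theorem stmt_15
    {Ω : Type*} [MeasurableSpace Ω] (P : Measure Ω) [IsProbabilityMeasure P]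
    (D : ℝ → Ω → ℝ) (φ : ℝ → ℝ) (E : ℝ → Ω → ℝ)
    (hDmeas : ∀ u : ℝ, Measurable (D u))
    (hDnonneg : ∀ u ω, 0 ≤ D u ω)
    (hD0 : ∀ᵐ ω ∂P, D 0 ω = 0)
    (hDpath : ∀ᵐ ω ∂P,
      (∀ u : ℝ, 0 ≤ u → ContinuousWithinAt (fun v => D v ω) (Set.Ici u) u) ∧
      StrictMonoOn (fun u => D u ω) (Set.Ici (0 : ℝ)) ∧
      (∀ M : ℝ, ∃ u : ℝ, 0 ≤ u ∧ M < D u ω))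
    (hφpos : ∀ l : ℝ, 0 < l → 0 < φ l)
    (hφmono : StrictMonoOn φ (Set.Ioi (0 : ℝ)))
    (hφ0 : Tendsto φ (nhdsWithin 0 (Set.Ioi 0)) (nhds 0))
    (hφtop : Tendsto φ atTop atTop)
    (hLap : ∀ u : ℝ, 0 ≤ u → ∀ l : ℝ, 0 < l →
      ∫ ω, Real.exp (-l * D u ω) ∂P = Real.exp (-u * φ l))
    (hE : ∀ t ω, E t ω = sInf {u : ℝ | 0 < u ∧ t < D u ω})
    (hEmeas : ∀ t : ℝ, Measurable (E t))
    (β : ℝ) (hβ0 : 0 < β) (hβ1 : β < 1)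
    (hRV : ∀ a : ℝ, 0 < a →
      Tendsto (fun l => φ (a * l) / φ l) atTop (nhds (a ^ β)))
    (α : ℝ) (hα0 : 0 < α) (hα2 : α < 2) (c : ℝ) (hc : 0 < c)
    (F : ℝ → ℝ) (hFmeas : Measurable F) (hFnn : ∀ s : ℝ, 0 ≤ F s)
    (hFbd : ∃ M : ℝ, ∀ s : ℝ, F s ≤ M)
    (hFasym : Tendsto (fun s => F s / (c * falpha α s)) (nhdsWithin 0 (Set.Ioi 0)) (nhds 1))
    (δ : ℝ) (hδ : 0 < δ) :
    Tendsto
      (fun t =>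
        (∫ ω, F (E t ω) ∂P) /
        (c * ∫ ω in {ω | 0 < E t ω ∧ E t ω ≤ δ}, falpha α (E t ω) ∂P))
      (nhdsWithin 0 (Set.Ioi 0)) (nhds 1) := by
  classical
  obtain ⟨M, hM⟩ := hFbd
  have hM0 : 0 ≤ M := le_trans (hFnn 0) (hM 0)
  set e1 : ℝ := Real.exp (-1) with he1def
  have he1 : 0 < e1 := Real.exp_pos _
  set δ' : ℝ := min δ e1 with hδ'def
  have hδ'pos : 0 < δ' := lt_min hδ he1
  have hδ'δ : δ' ≤ δ := min_le_left _ _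
  have hδ'e : δ' ≤ e1 := min_le_right _ _
  set c0 : ℝ := Real.exp (-1) - Real.exp (-2) with hc0def
  have hc0 : 0 < c0 := by
    have := Real.exp_lt_exp.2 (show (-2:ℝ) < -1 by norm_num)
    simp only [hc0def]; linarith
  set Bg : ℝ := δ ^ (1/α) + δ^2 + δ + 1 with hBgdef
  have hBg0 : 0 < Bg := by
    have : (0:ℝ) ≤ δ ^ (1/α) := Real.rpow_nonneg hδ.le _
    simp only [hBgdef]; nlinarith
  set C₀ : ℝ := 2*c*Bg + M with hC₀def
  have hC₀0 : 0 ≤ C₀ := by simp only [hC₀def]; nlinarith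
  have hQ := hD0.and hDpath
  -- the key limit functions
  have hKlim : ∀ γ : ℝ, 0 < γ →
      Tendsto (fun t => Real.exp (1 - γ * φ (1/t)) * φ (2/t))
        (nhdsWithin 0 (Set.Ioi 0)) (nhds 0) := by
    intro γ hγ
    exact key_limit φ hφpos hφtop β (hRV 2 two_pos) γ hγ
  -- a.e. positivity of E_t
  have hXpos : ∀ t : ℝ, 0 < t → ∀ᵐ ω ∂P, 0 < E t ω := by
    intro t ht
    filter_upwards [hQ] with ω hω
    rw [hE]
    exact Epos (hω.2.1 0 le_rfl) hω.1 hω.2.2.2 ht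
  -- tail upper bound
  have htail : ∀ t η : ℝ, 0 < t → 0 < η →
      (P {ω | η < E t ω}).toReal ≤ Real.exp (1 - η * φ (1/t)) := by
    intro t η ht hη
    have hsub : P {ω | η < E t ω} ≤ P {ω | D η ω ≤ t} := by
      apply measure_mono_ae
      filter_upwards [hQ] with ω hω hmem
      show D η ω ≤ t
      by_contra hgt
      push_neg at hgt
      have hle := Ele (D := fun v => D v ω) hη hgt
      have hmem' : η < E t ω := hmem
      rw [hE t ω] at hmem'
      exact absurd hmem' (not_lt.2 (by simpa using hle))
    have h2 := tail_upper P (D η) (hDmeas η) (fun ω => hDnonneg η ω) (t := t)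
        (show (0:ℝ) < 1/t by positivity) (hLap η hη.le (1/t) (by positivity))
    calc (P {ω | η < E t ω}).toReal ≤ (P {ω | D η ω ≤ t}).toReal := meas_toReal_mono P hsub
      _ ≤ Real.exp (1/t * t) * Real.exp (-η * φ (1/t)) := h2
      _ = Real.exp (1 - η * φ (1/t)) := by
          rw [← Real.exp_add]
          congr 1
          field_simp
          ring
  -- lower bound on P(E_t ≥ u t)
  have hlow : ∀ t : ℝ, 0 < t →
      c0 ≤ (P {ω | (φ (2/t))⁻¹ ≤ E t ω}).toReal := by
    intro t ht
    have hφ2 : 0 < φ (2/t) := hφpos _ (by positivity)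
    have hut : 0 < (φ (2/t))⁻¹ := by positivity
    have hlap := hLap ((φ (2/t))⁻¹) hut.le (2/t) (by positivity)
    have hexp : Real.exp (-(φ (2/t))⁻¹ * φ (2/t)) = Real.exp (-1) := by
      congr 1
      field_simp
    have h2 := tail_lower P (D ((φ (2/t))⁻¹)) (hDmeas _) (fun ω => hDnonneg _ ω)
        (show (0:ℝ) < 2/t by positivity) (t := t) (by rw [hlap, hexp])
    have h3 : Real.exp (-(2/t * t)) = Real.exp (-2) := by
      congr 1; field_simp
    rw [h3] at h2
    have hsub : P {ω | D ((φ (2/t))⁻¹) ω ≤ t} ≤ P {ω | (φ (2/t))⁻¹ ≤ E t ω} := by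
      apply measure_mono_ae
      filter_upwards [hQ] with ω hω hmem
      show (φ (2/t))⁻¹ ≤ E t ω
      rw [hE]
      exact Ege (hω.2.2.1.monotoneOn) hω.1 hω.2.2.2 ht.le hut hmem
    have := meas_toReal_mono P hsub
    simp only [hc0def]
    linarith
  -- main epsilon argument
  rw [Metric.tendsto_nhds]
  intro ε hε
  set ε₁ : ℝ := min (ε/3) (1/2) with hε₁def
  have hε₁pos : 0 < ε₁ := lt_min (by positivity) (by norm_num)
  have hε₁le1 : ε₁ ≤ 1 := le_trans (min_le_right _ _) (by norm_num)
  have hε₁ε : 2 * ε₁ < ε := by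
    have h1 : ε₁ ≤ ε/3 := min_le_left _ _
    linarith
  -- choose η from hFasym
  have hev := Metric.tendsto_nhds.1 hFasym ε₁ hε₁pos
  rw [eventually_nhdsWithin_iff, Metric.eventually_nhds_iff] at hev
  obtain ⟨r, hr, hball⟩ := hev
  set η : ℝ := min (r/2) δ' with hηdef
  have hηpos : 0 < η := lt_min (by positivity) hδ'pos
  have hηδ' : η ≤ δ' := min_le_right _ _
  have hηδ : η ≤ δ := le_trans hηδ' hδ'δ
  have hηe : η ≤ e1 := le_trans hηδ' hδ'e
  have hFband : ∀ s : ℝ, 0 < s → s ≤ η → |F s - c * falpha α s| ≤ ε₁ * c * falpha α s := by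
    intro s hs hsη
    have hfa : 0 < c * falpha α s := mul_pos hc (falpha_pos hα0 hs (le_trans hsη hηe))
    have hd := hball (show dist s 0 < r by
        rw [Real.dist_eq, sub_zero, abs_of_pos hs]
        have h2 := min_le_left (r/2) δ'
        have := le_trans hsη h2
        linarith) (show s ∈ Set.Ioi (0:ℝ) from hs)
    rw [Real.dist_eq] at hd
    have heq : F s - c * falpha α s = (F s / (c * falpha α s) - 1) * (c * falpha α s) := by
      rw [div_sub_one hfa.ne', div_mul_cancel₀ _ hfa.ne']
    rw [heq, abs_mul, abs_of_pos hfa]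
    calc |F s / (c * falpha α s) - 1| * (c * falpha α s) ≤ ε₁ * (c * falpha α s) :=
        mul_le_mul_of_nonneg_right hd.le hfa.le
      _ = ε₁ * c * falpha α s := by ring
  -- eventual conditions
  have hev1 : ∀ᶠ t in nhdsWithin 0 (Set.Ioi 0), (φ (2/t))⁻¹ < δ' := by
    have hinv : Tendsto (fun t : ℝ => (φ (2/t))⁻¹) (nhdsWithin 0 (Set.Ioi 0)) (nhds 0) :=
      (hφtop.comp two_div_atTop).inv_tendsto_atTop
    exact hinv.eventually_lt_const hδ'pos
  have hev2 : ∀ᶠ t in nhdsWithin 0 (Set.Ioi 0),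
      Real.exp (1 - δ' * φ (1/t)) * φ (2/t) < c0 / (2*(1+Bg)) :=
    (hKlim δ' hδ'pos).eventually_lt_const (by positivity)
  have hev3 : ∀ᶠ t in nhdsWithin 0 (Set.Ioi 0),
      Real.exp (1 - η * φ (1/t)) * φ (2/t) < (ε₁*c*c0)/(2*C₀+2) :=
    (hKlim η hηpos).eventually_lt_const (by positivity)
  filter_upwards [self_mem_nhdsWithin, hev1, hev2, hev3] with t htmem hu_small hK1 hK2
  have ht : (0:ℝ) < t := htmem
  have hφ1 : 0 < φ (1/t) := hφpos _ (by positivity)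
  have hφ2 : 0 < φ (2/t) := hφpos _ (by positivity)
  set u : ℝ := (φ (2/t))⁻¹ with hudef
  have hut0 : 0 < u := by positivity
  have hue : u ≤ e1 := le_trans hu_small.le hδ'e
  set fu : ℝ := falpha α u with hfudef
  have hfupos : 0 < fu := falpha_pos hα0 hut0 hue
  have hfu1 : fu ≤ 1 := falpha_le_one hα0 hut0 hue
  have hfu_ge : (φ (2/t))⁻¹ ≤ fu := falpha_ge_self hα0 hut0 hue
  have hfuφ : 1 ≤ fu * φ (2/t) := by
    have h1 := mul_le_mul_of_nonneg_right hfu_ge hφ2.le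
    rwa [inv_mul_cancel₀ hφ2.ne'] at h1
  -- measurable sets
  have hAmeas : ∀ b : ℝ, MeasurableSet {ω | 0 < E t ω ∧ E t ω ≤ b} := fun b =>
    (hEmeas t) measurableSet_Ioc
  set Aδ : Set Ω := {ω | 0 < E t ω ∧ E t ω ≤ δ} with hAδdef
  set Aδ' : Set Ω := {ω | 0 < E t ω ∧ E t ω ≤ δ'} with hAδ'def
  set Aη : Set Ω := {ω | 0 < E t ω ∧ E t ω ≤ η} with hAηdef
  set Iδ : ℝ := ∫ ω in Aδ, falpha α (E t ω) ∂P with hIδdef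
  set Iη : ℝ := ∫ ω in Aη, falpha α (E t ω) ∂P with hIηdef
  set N : ℝ := ∫ ω, F (E t ω) ∂P with hNdef
  set p : ℝ := (P {ω | η < E t ω}).toReal with hpdef
  set q : ℝ := (P {ω | δ' < E t ω}).toReal with hqdef
  have hp : p ≤ Real.exp (1 - η * φ (1/t)) := htail t η ht hηpos
  have hq : q ≤ Real.exp (1 - δ' * φ (1/t)) := htail t δ' ht hδ'pos
  have hp0 : 0 ≤ p := ENNReal.toReal_nonneg
  have hq0 : 0 ≤ q := ENNReal.toReal_nonneg
  -- integrability
  have hFint : Integrable (fun ω => F (E t ω)) P :=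
    integrable_of_bound P _ (hFmeas.comp (hEmeas t)) M
      (fun ω => by rw [abs_of_nonneg (hFnn _)]; exact hM _)
  have hfaint : ∀ b : ℝ, 0 < b → b ≤ δ →
      IntegrableOn (fun ω => falpha α (E t ω)) {ω | 0 < E t ω ∧ E t ω ≤ b} P := by
    intro b hb hbδ
    apply Measure.integrableOn_of_bounded (M := Bg) (measure_ne_top P _)
      ((falpha_meas α).comp (hEmeas t)).aestronglyMeasurable
    rw [ae_restrict_iff' (hAmeas b)]
    refine Filter.Eventually.of_forall fun ω hω => ?_
    rw [Real.norm_eq_abs]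
    exact falpha_abs_le hδ hω.1 (le_trans hω.2 hbδ)
  -- numerator split
  have hNsplit : N = (∫ ω in Aη, F (E t ω) ∂P) + ∫ ω in Aηᶜ, F (E t ω) ∂P :=
    (integral_add_compl (hAmeas η) hFint).symm
  have hIη0 : 0 ≤ Iη := setIntegral_nonneg (hAmeas η)
    (fun ω hω => (falpha_pos hα0 hω.1 (le_trans hω.2 hηe)).le)
  have hR2 : |(∫ ω in Aη, F (E t ω) ∂P) - c * Iη| ≤ ε₁ * c * Iη := by
    have hsub : ∫ ω in Aη, (F (E t ω) - c * falpha α (E t ω)) ∂P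
        = (∫ ω in Aη, F (E t ω) ∂P) - c * Iη := by
      rw [integral_sub hFint.integrableOn ((hfaint η hηpos hηδ).const_mul c),
        integral_const_mul]
    rw [← hsub]
    calc |∫ ω in Aη, (F (E t ω) - c * falpha α (E t ω)) ∂P|
        ≤ ∫ ω in Aη, |F (E t ω) - c * falpha α (E t ω)| ∂P := by
          simpa [Real.norm_eq_abs] using norm_integral_le_integral_norm
            (μ := P.restrict Aη) (fun ω => F (E t ω) - c * falpha α (E t ω))
      _ ≤ ∫ ω in Aη, ε₁ * c * falpha α (E t ω) ∂P := by
          apply setIntegral_mono_on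
            ((hFint.integrableOn.sub ((hfaint η hηpos hηδ).const_mul c)).abs)
            ((hfaint η hηpos hηδ).const_mul (ε₁*c)) (hAmeas η)
          intro ω hω
          exact hFband _ hω.1 hω.2
      _ = ε₁ * c * Iη := integral_const_mul _ _
  -- complement bound
  have hzero : P {ω | ¬ 0 < E t ω} = 0 := by
    have h1 := hXpos t ht; rwa [ae_iff] at h1
  have hPcomp : (P Aηᶜ).toReal ≤ p := by
    apply meas_toReal_mono
    calc P Aηᶜ ≤ P ({ω | η < E t ω} ∪ {ω | ¬ 0 < E t ω}) := by
          apply measure_mono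
          intro ω hω
          by_cases h0 : 0 < E t ω
          · left; show η < E t ω; by_contra hle; push_neg at hle; exact hω ⟨h0, hle⟩
          · right; exact h0
      _ ≤ P {ω | η < E t ω} + P {ω | ¬ 0 < E t ω} := measure_union_le _ _
      _ = P {ω | η < E t ω} := by rw [hzero, add_zero]
  have hR3 : ∫ ω in Aηᶜ, F (E t ω) ∂P ≤ M * p := by
    have hb := norm_setIntegral_le_of_norm_le_const (μ := P)
      (measure_lt_top P Aηᶜ)
      (f := fun ω => F (E t ω)) (C := M)
      (fun ω _ => by rw [Real.norm_eq_abs, abs_of_nonneg (hFnn _)]; exact hM _)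
    rw [Real.norm_eq_abs] at hb
    calc ∫ ω in Aηᶜ, F (E t ω) ∂P ≤ |∫ ω in Aηᶜ, F (E t ω) ∂P| := le_abs_self _
      _ ≤ M * (P Aηᶜ).toReal := hb
      _ ≤ M * p := mul_le_mul_of_nonneg_left hPcomp hM0
  have hR3' : 0 ≤ ∫ ω in Aηᶜ, F (E t ω) ∂P :=
    setIntegral_nonneg (hAmeas η).compl (fun ω _ => hFnn _)
  -- Iδ vs Iη
  have hsubsetηδ : Aη ⊆ Aδ := fun ω hω => ⟨hω.1, le_trans hω.2 hηδ⟩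
  have hdiffmeas : MeasurableSet (Aδ \ Aη) := (hAmeas δ).diff (hAmeas η)
  have hIδsplit : Iδ = Iη + ∫ ω in Aδ \ Aη, falpha α (E t ω) ∂P := by
    have h1 := setIntegral_union (f := fun ω => falpha α (E t ω)) (μ := P)
      disjoint_sdiff_self_right hdiffmeas (hfaint η hηpos hηδ)
      ((hfaint δ hδ le_rfl).mono_set Set.diff_subset)
    rw [Set.union_diff_cancel hsubsetηδ] at h1
    exact h1
  have hTbound : |∫ ω in Aδ \ Aη, falpha α (E t ω) ∂P| ≤ Bg * p := by
    have hb := norm_setIntegral_le_of_norm_le_const (μ := P)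
      (measure_lt_top P (Aδ \ Aη))
      (f := fun ω => falpha α (E t ω)) (C := Bg)
      (fun ω hω => by rw [Real.norm_eq_abs]; exact falpha_abs_le hδ hω.1.1 hω.1.2)
    rw [Real.norm_eq_abs] at hb
    have hPd : (P (Aδ \ Aη)).toReal ≤ p := by
      apply meas_toReal_mono
      apply measure_mono
      intro ω hω
      have h0 := hω.1.1
      show η < E t ω
      by_contra hle
      push_neg at hle
      exact hω.2 ⟨h0, hle⟩
    calc |∫ ω in Aδ \ Aη, falpha α (E t ω) ∂P| ≤ Bg * (P (Aδ \ Aη)).toReal := hb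
      _ ≤ Bg * p := mul_le_mul_of_nonneg_left hPd hBg0.le
  -- lower bound for Iδ
  have hsubsetδ'δ : Aδ' ⊆ Aδ := fun ω hω => ⟨hω.1, le_trans hω.2 hδ'δ⟩
  have hdiffmeas' : MeasurableSet (Aδ \ Aδ') := (hAmeas δ).diff (hAmeas δ')
  have hIδsplit2 : Iδ = (∫ ω in Aδ', falpha α (E t ω) ∂P)
      + ∫ ω in Aδ \ Aδ', falpha α (E t ω) ∂P := by
    have h1 := setIntegral_union (f := fun ω => falpha α (E t ω)) (μ := P)
      disjoint_sdiff_self_right hdiffmeas' (hfaint δ' hδ'pos hδ'δ)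
      ((hfaint δ hδ le_rfl).mono_set Set.diff_subset)
    rw [Set.union_diff_cancel hsubsetδ'δ] at h1
    exact h1
  have hT2 : |∫ ω in Aδ \ Aδ', falpha α (E t ω) ∂P| ≤ Bg * q := by
    have hb := norm_setIntegral_le_of_norm_le_const (μ := P)
      (measure_lt_top P (Aδ \ Aδ'))
      (f := fun ω => falpha α (E t ω)) (C := Bg)
      (fun ω hω => by rw [Real.norm_eq_abs]; exact falpha_abs_le hδ hω.1.1 hω.1.2)
    rw [Real.norm_eq_abs] at hb
    have hPd : (P (Aδ \ Aδ')).toReal ≤ q := by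
      apply meas_toReal_mono
      apply measure_mono
      intro ω hω
      have h0 := hω.1.1
      show δ' < E t ω
      by_contra hle
      push_neg at hle
      exact hω.2 ⟨h0, hle⟩
    calc |∫ ω in Aδ \ Aδ', falpha α (E t ω) ∂P| ≤ Bg * (P (Aδ \ Aδ')).toReal := hb
      _ ≤ Bg * q := mul_le_mul_of_nonneg_left hPd hBg0.le
  -- split Aδ' into B1 ∪ B2
  set B1 : Set Ω := {ω | 0 < E t ω ∧ E t ω < u} with hB1def
  set B2 : Set Ω := {ω | u ≤ E t ω ∧ E t ω ≤ δ'} with hB2def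
  have hB1meas : MeasurableSet B1 := (hEmeas t) measurableSet_Ioo
  have hB2meas : MeasurableSet B2 := (hEmeas t) measurableSet_Icc
  have hsplitB : Aδ' = B1 ∪ B2 := by
    ext ω
    constructor
    · rintro ⟨h0, hle⟩
      by_cases hlt : E t ω < u
      · exact Or.inl ⟨h0, hlt⟩
      · exact Or.inr ⟨not_lt.1 hlt, hle⟩
    · rintro (⟨h0, hlt⟩ | ⟨hge, hle⟩)
      · exact ⟨h0, le_trans hlt.le hu_small.le⟩
      · exact ⟨lt_of_lt_of_le hut0 hge, hle⟩
  have hB1sub : B1 ⊆ Aδ' := fun ω hω => ⟨hω.1, le_trans hω.2.le hu_small.le⟩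
  have hB2sub : B2 ⊆ Aδ' := fun ω hω => ⟨lt_of_lt_of_le hut0 hω.1, hω.2⟩
  have hdisjB : Disjoint B1 B2 := by
    rw [Set.disjoint_left]
    intro ω h1 h2
    exact absurd h2.1 (not_le.2 h1.2)
  have hIB : ∫ ω in Aδ', falpha α (E t ω) ∂P
      = (∫ ω in B1, falpha α (E t ω) ∂P) + ∫ ω in B2, falpha α (E t ω) ∂P := by
    rw [hsplitB]
    exact setIntegral_union hdisjB hB2meas
      ((hfaint δ' hδ'pos hδ'δ).mono_set hB1sub)
      ((hfaint δ' hδ'pos hδ'δ).mono_set hB2sub)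
  have hIB1 : 0 ≤ ∫ ω in B1, falpha α (E t ω) ∂P :=
    setIntegral_nonneg hB1meas
      (fun ω hω => (falpha_pos hα0 hω.1 (le_trans hω.2.le hue)).le)
  have hIB2 : fu * (P B2).toReal ≤ ∫ ω in B2, falpha α (E t ω) ∂P := by
    have h1 := setIntegral_mono_on (f := fun _ : Ω => fu)
      (g := fun ω => falpha α (E t ω)) (μ := P) (s := B2)
      (integrableOn_const (measure_ne_top P _))
      ((hfaint δ' hδ'pos hδ'δ).mono_set hB2sub) hB2meas
      (fun ω hω => falpha_mono hα0 hut0 hω.1 (le_trans hω.2 hδ'e))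
    rwa [setIntegral_const, smul_eq_mul, mul_comm] at h1
  have hlowt : c0 ≤ (P {ω | u ≤ E t ω}).toReal := hlow t ht
  clear_value Iδ Iη N p q fu u C₀ Bg c0 ε₁ η δ' e1
  have hPB2 : c0 - q ≤ (P B2).toReal := by
    have hsub : {ω | u ≤ E t ω} ⊆ B2 ∪ {ω | δ' < E t ω} := by
      intro ω hω
      by_cases hle : E t ω ≤ δ'
      · exact Or.inl ⟨hω, hle⟩
      · exact Or.inr (not_le.1 hle)
    have h1 : (P {ω | u ≤ E t ω}).toReal ≤ (P B2).toReal + (P {ω | δ' < E t ω}).toReal := by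
      calc (P {ω | u ≤ E t ω}).toReal
          ≤ (P (B2 ∪ {ω | δ' < E t ω})).toReal := meas_toReal_mono P (measure_mono hsub)
        _ ≤ (P B2 + P {ω | δ' < E t ω}).toReal := ENNReal.toReal_mono
            (ENNReal.add_ne_top.2 ⟨measure_ne_top P _, measure_ne_top P _⟩)
            (measure_union_le _ _)
        _ = (P B2).toReal + (P {ω | δ' < E t ω}).toReal :=
            ENNReal.toReal_add (measure_ne_top P _) (measure_ne_top P _)
    have hq' : q = (P {ω | δ' < E t ω}).toReal := hqdef
    rw [hq']
    linarith only [h1, hlowt]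
  have hIδ'low : fu * (c0 - q) ≤ ∫ ω in Aδ', falpha α (E t ω) ∂P := by
    have h2 : fu * (c0 - q) ≤ fu * (P B2).toReal := mul_le_mul_of_nonneg_left hPB2 hfupos.le
    rw [hIB]
    linarith only [h2, hIB1, hIB2]
  -- the step (1+Bg) q ≤ (c0/2) fu
  have hstep : (1+Bg) * q ≤ c0/2 * fu := by
    have hqφ : q * φ (2/t) ≤ Real.exp (1 - δ' * φ (1/t)) * φ (2/t) :=
      mul_le_mul_of_nonneg_right hq hφ2.le
    have h1 : (1+Bg) * (q * φ (2/t)) ≤ (1+Bg) * (c0 / (2*(1+Bg))) := by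
      apply mul_le_mul_of_nonneg_left _ (by positivity)
      exact le_trans hqφ hK1.le
    have h1B : (0:ℝ) < 1 + Bg := by linarith only [hBg0]
    have h2 : (1+Bg) * (c0 / (2*(1+Bg))) = c0/2 := by
      field_simp [h1B.ne']
    have h3 : c0/2 ≤ c0/2 * (fu * φ (2/t)) := by
      have h3' := mul_le_mul_of_nonneg_left hfuφ (by positivity : (0:ℝ) ≤ c0/2)
      linarith only [h3']
    have h4 : ((1+Bg) * q) * φ (2/t) ≤ (c0/2 * fu) * φ (2/t) := by
      have e2 : ((1+Bg) * q) * φ (2/t) = (1+Bg) * (q * φ (2/t)) := by ring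
      have e3 : (c0/2 * fu) * φ (2/t) = c0/2 * (fu * φ (2/t)) := by ring
      rw [e2, e3]
      linarith only [h1, h2, h3]
    exact le_of_mul_le_mul_right h4 hφ2
  have hIlow : c0/2 * fu ≤ Iδ := by
    have hT2' : -(Bg*q) ≤ ∫ ω in Aδ \ Aδ', falpha α (E t ω) ∂P := by
      have h0' := neg_abs_le (∫ ω in Aδ \ Aδ', falpha α (E t ω) ∂P)
      linarith only [h0', hT2]
    rw [hIδsplit2]
    have hfq : fu * q ≤ 1 * q := mul_le_mul_of_nonneg_right hfu1 hq0
    have hexp : fu * (c0 - q) = fu * c0 - fu * q := by ring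
    rw [hexp] at hIδ'low
    linarith only [hIδ'low, hT2', hstep, hfq]
  have hIpos : 0 < Iδ := lt_of_lt_of_le (mul_pos (half_pos hc0) hfupos) hIlow
  have hcIpos : 0 < c * Iδ := mul_pos hc hIpos
  -- assemble the numerator bound
  have hIηIδ : |Iδ - Iη| ≤ Bg * p := by
    rw [hIδsplit]
    simpa using hTbound
  have h5 : Iη ≤ Iδ + Bg * p := by
    have h5' := abs_le.1 hIηIδ
    linarith only [h5'.1, h5'.2]
  have hNbound : |N - c * Iδ| ≤ ε₁ * (c * Iδ) + C₀ * p := by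
    have habs1 := abs_le.1 hR2
    have habs2 := abs_le.1 hIηIδ
    have hmul1 : ε₁ * c * Iη ≤ ε₁ * c * (Iδ + Bg * p) :=
      mul_le_mul_of_nonneg_left h5 (mul_nonneg hε₁pos.le hc.le)
    have hmul2 : ε₁ * (c * (Bg * p)) ≤ 1 * (c * (Bg * p)) :=
      mul_le_mul_of_nonneg_right hε₁le1 (mul_nonneg hc.le (mul_nonneg hBg0.le hp0))
    have h6 : c * (Iδ - Iη) ≤ c * (Bg * p) := mul_le_mul_of_nonneg_left habs2.2 hc.le
    have h7 : c * (-(Bg * p)) ≤ c * (Iδ - Iη) := mul_le_mul_of_nonneg_left habs2.1 hc.le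
    have heqC : C₀ * p = 2*(c*(Bg*p)) + M*p := by rw [hC₀def]; ring
    rw [hNsplit, abs_le]
    constructor
    · linarith only [habs1.1, hmul1, hmul2, h6, h7, heqC, hR3, hR3', hp0,
        mul_nonneg (mul_nonneg hε₁pos.le hc.le) hIη0]
    · linarith only [habs1.2, hmul1, hmul2, h6, h7, heqC, hR3, hR3', hp0]
  -- C₀ p ≤ ε₁ (c Iδ)
  have hfrac : C₀ * p ≤ ε₁ * (c * Iδ) := by
    have hpφ : p * φ (2/t) ≤ Real.exp (1 - η * φ (1/t)) * φ (2/t) :=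
      mul_le_mul_of_nonneg_right hp hφ2.le
    have h1 : C₀ * (p * φ (2/t)) ≤ C₀ * ((ε₁*c*c0)/(2*C₀+2)) :=
      mul_le_mul_of_nonneg_left (le_trans hpφ hK2.le) hC₀0
    have hd : (0:ℝ) < 2*C₀+2 := by linarith only [hC₀0]
    have h2 : C₀ * ((ε₁*c*c0)/(2*C₀+2)) ≤ ε₁*c*c0/2 := by
      rw [mul_div_assoc', div_le_div_iff₀ hd two_pos]
      have hpos := mul_pos (mul_pos hε₁pos hc) hc0
      nlinarith only [hpos, hC₀0]
    have hIφ : c0/2 ≤ Iδ * φ (2/t) := by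
      have h3 := mul_le_mul_of_nonneg_right hIlow hφ2.le
      have h3' := mul_le_mul_of_nonneg_left hfuφ (by positivity : (0:ℝ) ≤ c0/2)
      linarith only [h3, h3']
    have h4 : ε₁*c*c0/2 ≤ (ε₁ * (c * Iδ)) * φ (2/t) := by
      have h5' : ε₁ * c * (c0/2) ≤ ε₁ * c * (Iδ * φ (2/t)) :=
        mul_le_mul_of_nonneg_left hIφ (mul_nonneg hε₁pos.le hc.le)
      linarith only [h5']
    have h6 : (C₀ * p) * φ (2/t) ≤ (ε₁ * (c * Iδ)) * φ (2/t) := by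
      have e2 : (C₀ * p) * φ (2/t) = C₀ * (p * φ (2/t)) := by ring
      rw [e2]
      linarith only [h1, h2, h4]
    exact le_of_mul_le_mul_right h6 hφ2
  -- conclude
  rw [Real.dist_eq, div_sub_one hcIpos.ne', abs_div, abs_of_pos hcIpos, div_lt_iff₀ hcIpos]
  calc |N - c*Iδ| ≤ ε₁*(c*Iδ) + C₀*p := hNbound
    _ ≤ 2*ε₁*(c*Iδ) := by linarith only [hfrac, hNbound]
    _ < ε * (c*Iδ) := mul_lt_mul_of_pos_right hε₁ε hcIpos
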